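/- Let (𝒜⁽ⁿ⁾, τ⁽ⁿ⁾) for n ∈ ℕ and (𝒜, τ) be unital C*-algebras equipped with faithful tracial states, let x⁽ⁿ⁾ = (x₁⁽ⁿ⁾, …, x_m⁽ⁿ⁾) be a tuple in 𝒜⁽ⁿ⁾ for each n, and let x = (x₁, …, x_m) be a tuple in 𝒜 such that x⁽ⁿ⁾ strongly converges to x. Let r be a rational expression in 2m variables such that (x, x*) lies in the domain of r in 𝒜. Then lim_{n→∞} τ⁽ⁿ⁾(r(x⁽ⁿ⁾, (x⁽ⁿ⁾)*)) = τ(r(x, x*)) (the evaluations r(x⁽ⁿ⁾, (x⁽ⁿ⁾)*) being defined for all sufficiently large n). -/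

import Mathlib

open Filter Topology

/-- A non-commutative rational expression in variables indexed by `σ`:
the inductive syntax generated by complex scalars and formal variables,
closed under addition, multiplication and formal inverse. -/
inductive RatExpr (σ : Type*) : Type _
  | scalar : ℂ → RatExpr σ
  | var : σ → RatExpr σ
  | add : RatExpr σ → RatExpr σ → RatExpr σ
  | mul : RatExpr σ → RatExpr σ → RatExpr σ
  | inv : RatExpr σ → RatExpr σ

open Classical in
/-- Partial evaluation of a rational expression at a tuple `a` in a unital complex
algebra.  A formal inverse evaluates exactly when its operand evaluates to an
invertible element, and then its value is that inverse. -/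
noncomputable def RatExpr.eval? {σ : Type*} {B : Type*} [Ring B] [Algebra ℂ B]
    (a : σ → B) : RatExpr σ → Option B
  | .scalar c => some (algebraMap ℂ B c)
  | .var i => some (a i)
  | .add r s => do return (← r.eval? a) + (← s.eval? a)
  | .mul r s => do return (← r.eval? a) * (← s.eval? a)
  | .inv r => (r.eval? a).bind fun b => if IsUnit b then some (Ring.inverse b) else none

/-- `a` lies in the domain of the rational expression `r`. -/
def RatExpr.InDomain {σ : Type*} {B : Type*} [Ring B] [Algebra ℂ B]
    (r : RatExpr σ) (a : σ → B) : Prop := (r.eval? a).isSome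

/-- The evaluation of a rational expression (defaulting to `0` off the domain). -/
noncomputable def RatExpr.eval {σ : Type*} {B : Type*} [Ring B] [Algebra ℂ B]
    (r : RatExpr σ) (a : σ → B) : B := (r.eval? a).getD 0

/-- The tuple `(x₁, …, x_m, x₁*, …, x_m*)` built from the `m`-tuple `x`. -/
def starTuple {m : ℕ} {A : Type*} [Star A] (x : Fin m → A) : (Fin m ⊕ Fin m) → A :=
  Sum.elim x (fun i => star (x i))

/-- `τ` is a faithful tracial state on the unital C⋆-algebra `A`:
a linear functional with `τ 1 = 1`, `τ (a* a) ≥ 0`, `τ (a b) = τ (b a)`, and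
`τ (a* a) = 0 → a = 0`. -/
structure IsFaithfulTracialState (A : Type*) [CStarAlgebra A] (τ : A → ℂ) : Prop where
  map_add : ∀ a b, τ (a + b) = τ a + τ b
  map_smul : ∀ (c : ℂ) a, τ (c • a) = c * τ a
  map_one : τ 1 = 1
  nonneg_re : ∀ a, 0 ≤ (τ (star a * a)).re
  im_eq_zero : ∀ a, (τ (star a * a)).im = 0
  tracial : ∀ a b, τ (a * b) = τ (b * a)
  faithful : ∀ a, τ (star a * a) = 0 → a = 0

/-- Strong convergence of a sequence of `m`-tuples `x n` in C⋆-probability spaces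
`(A n, τ' n)` to the tuple `y` in `(B, τ)`: convergence in trace and in norm of all
noncommutative `*`-polynomials, i.e. of all elements of the free algebra on `2m`
generators evaluated at `(x, x*)` resp. `(y, y*)`. -/
def StronglyConverges {m : ℕ} {A : ℕ → Type*} [∀ n, CStarAlgebra (A n)]
    {B : Type*} [CStarAlgebra B]
    (τ' : ∀ n, A n → ℂ) (τ : B → ℂ)
    (x : ∀ n, Fin m → A n) (y : Fin m → B) : Prop :=
  ∀ p : FreeAlgebra ℂ (Fin m ⊕ Fin m),
    Tendsto (fun n => τ' n (FreeAlgebra.lift ℂ (starTuple (x n)) p)) atTop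
      (𝓝 (τ (FreeAlgebra.lift ℂ (starTuple y) p))) ∧
    Tendsto (fun n => ‖FreeAlgebra.lift ℂ (starTuple (x n)) p‖) atTop
      (𝓝 ‖FreeAlgebra.lift ℂ (starTuple y) p‖)

lemma SC4.neumann {R : Type*} [NormedRing R] [NormedAlgebra ℂ R] [CompleteSpace R]
    (h1 : ‖(1 : R)‖ ≤ 1) {t s : ℝ} (ht : 0 < t) (hst : s < t) {h : R}
    (hh : ‖algebraMap ℂ R (t : ℂ) - h‖ ≤ s) (K : ℕ) :
    IsUnit h ∧
    ‖Ring.inverse h - (t : ℂ)⁻¹ • ∑ k ∈ Finset.range K, (1 - (t : ℂ)⁻¹ • h) ^ k‖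
      ≤ (s / t) ^ K / (t - s) := by
  have hs0 : 0 ≤ s := le_trans (norm_nonneg _) hh
  have htc : (t : ℂ) ≠ 0 := by exact_mod_cast ht.ne'
  set u : R := 1 - (t : ℂ)⁻¹ • h with hu_def
  have hu_eq : u = (t : ℂ)⁻¹ • (algebraMap ℂ R (t : ℂ) - h) := by
    rw [smul_sub, Algebra.algebraMap_eq_smul_one, smul_smul, inv_mul_cancel₀ htc, one_smul]
  have hnorm_u : ‖u‖ ≤ s / t := by
    rw [hu_eq, norm_smul]
    have : ‖(t : ℂ)⁻¹‖ = t⁻¹ := by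
      rw [norm_inv, Complex.norm_real, Real.norm_of_nonneg ht.le]
    rw [this, div_eq_inv_mul]
    exact mul_le_mul_of_nonneg_left hh (by positivity)
  have hu1 : ‖u‖ < 1 := lt_of_le_of_lt hnorm_u (by rw [div_lt_one ht]; exact hst)
  have hunit1 : IsUnit (1 - u) := isUnit_one_sub_of_norm_lt_one hu1
  have h_eq : h = (t : ℂ) • (1 - u) := by
    rw [hu_def, sub_sub_cancel, smul_smul, mul_inv_cancel₀ htc, one_smul]
  have hunit : IsUnit h := by
    rw [h_eq, Algebra.smul_def]
    exact ((isUnit_iff_ne_zero.mpr htc).map (algebraMap ℂ R)).mul hunit1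
  set w : R := Ring.inverse (1 - u) with hw_def
  have hws : (1 - u) * w = 1 := Ring.mul_inverse_cancel _ hunit1
  have hsw : w * (1 - u) = 1 := Ring.inverse_mul_cancel _ hunit1
  have hw_bound : ‖w‖ ≤ t / (t - s) := by
    have hws' : w - u * w = 1 := by rw [← hws, sub_mul 1 u w, one_mul]
    have hw1 : w = 1 + u * w := by rw [← hws']; abel
    have : ‖w‖ ≤ 1 + (s / t) * ‖w‖ := by
      calc ‖w‖ = ‖1 + u * w‖ := by rw [← hw1]
        _ ≤ ‖(1 : R)‖ + ‖u * w‖ := norm_add_le _ _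
        _ ≤ 1 + (s / t) * ‖w‖ := by
            gcongr
            calc ‖u * w‖ ≤ ‖u‖ * ‖w‖ := norm_mul_le _ _
              _ ≤ (s / t) * ‖w‖ := mul_le_mul_of_nonneg_right hnorm_u (norm_nonneg w)
    rw [le_div_iff₀ (by linarith : (0:ℝ) < t - s)]
    have key : s / t * t = s := div_mul_cancel₀ s ht.ne'
    nlinarith [mul_le_mul_of_nonneg_right this ht.le, norm_nonneg w]
  have hinv : Ring.inverse h = (t : ℂ)⁻¹ • w := by
    have hmul : h * ((t : ℂ)⁻¹ • w) = 1 := by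
      rw [h_eq, smul_mul_smul_comm, mul_inv_cancel₀ htc, one_smul, hws]
    calc Ring.inverse h = Ring.inverse h * (h * ((t : ℂ)⁻¹ • w)) := by rw [hmul, mul_one]
      _ = (Ring.inverse h * h) * ((t : ℂ)⁻¹ • w) := by rw [mul_assoc]
      _ = (t : ℂ)⁻¹ • w := by rw [Ring.inverse_mul_cancel _ hunit, one_mul]
  refine ⟨hunit, ?_⟩
  have hgeo : w - ∑ k ∈ Finset.range K, u ^ k = u ^ K * w := by
    have h2 : (∑ k ∈ Finset.range K, u ^ k) * (1 - u) = 1 - u ^ K := by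
      have hg := geom_sum_mul u K
      rw [show (1 : R) - u = -(u - 1) from (neg_sub u 1).symm, mul_neg, hg, neg_sub]
    have h3 : (∑ k ∈ Finset.range K, u ^ k) * ((1 - u) * w) = (1 - u ^ K) * w := by
      rw [← mul_assoc, h2]
    rw [hws, mul_one] at h3
    rw [h3, sub_mul, one_mul, sub_sub_cancel]
  have hfin : Ring.inverse h - (t : ℂ)⁻¹ • ∑ k ∈ Finset.range K, u ^ k
      = (t : ℂ)⁻¹ • (u ^ K * w) := by
    rw [hinv, ← smul_sub, hgeo]
  rw [hfin, norm_smul]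
  have hnt : ‖(t : ℂ)⁻¹‖ = t⁻¹ := by
    rw [norm_inv, Complex.norm_real, Real.norm_of_nonneg ht.le]
  rw [hnt]
  have hupow : ‖u ^ K‖ ≤ (s / t) ^ K := by
    rcases Nat.eq_zero_or_pos K with hK | hK
    · subst hK; simpa using h1
    · exact le_trans (norm_pow_le' u hK) (pow_le_pow_left₀ (norm_nonneg u) hnorm_u K)
  have hmain : ‖u ^ K * w‖ ≤ (s / t) ^ K * (t / (t - s)) :=
    le_trans (norm_mul_le _ _)
      (mul_le_mul hupow hw_bound (norm_nonneg w) (by positivity))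
  calc t⁻¹ * ‖u ^ K * w‖ ≤ t⁻¹ * ((s / t) ^ K * (t / (t - s))) := by gcongr
    _ = (s / t) ^ K / (t - s) := by
        have h2 : t - s ≠ 0 := by linarith
        field_simp

namespace SC4
variable {R : Type*} [CStarAlgebra R] {φ : R → ℂ}

lemma state_map_zero (hφ : IsFaithfulTracialState R φ) : φ 0 = 0 := by
  have := hφ.map_smul 0 0
  simpa using this

lemma state_map_sub (hφ : IsFaithfulTracialState R φ) (a b : R) : φ (a - b) = φ a - φ b := by
  have h1 : φ (a + (-1 : ℂ) • b) = φ a + (-1 : ℂ) * φ b := by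
    rw [hφ.map_add, hφ.map_smul]
  simpa [sub_eq_add_neg, neg_one_smul] using h1

lemma state_herm (hφ : IsFaithfulTracialState R φ) (a b : R) :
    φ (star b * a) = starRingEnd ℂ (φ (star a * b)) := by
  set u := φ (star a * b) with hu
  set v := φ (star b * a) with hv
  have expand : ∀ z : ℂ, φ (star (a + z • b) * (a + z • b)) =
      φ (star a * a) + z * u + starRingEnd ℂ z * v +
        starRingEnd ℂ z * z * φ (star b * b) := by
    intro z
    have : star (a + z • b) * (a + z • b) =
        star a * a + z • (star a * b) + (starRingEnd ℂ z) • (star b * a) +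
          (starRingEnd ℂ z * z) • (star b * b) := by
      rw [star_add, star_smul, add_mul, mul_add, mul_add, Complex.star_def]
      rw [smul_mul_assoc, smul_mul_assoc, mul_smul_comm, mul_smul_comm, smul_smul]
      abel
    rw [this, hφ.map_add, hφ.map_add, hφ.map_add, hφ.map_smul, hφ.map_smul, hφ.map_smul]
  have h1 := hφ.im_eq_zero (a + (1 : ℂ) • b)
  rw [expand 1] at h1
  simp only [map_one, one_mul] at h1
  have h1' : u.im + v.im = 0 := by
    have ha := hφ.im_eq_zero a
    have hb := hφ.im_eq_zero b
    simp [Complex.add_im, ha, hb] at h1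
    linarith
  have h2 := hφ.im_eq_zero (a + Complex.I • b)
  rw [expand Complex.I] at h2
  have hIc : starRingEnd ℂ Complex.I = -Complex.I := Complex.conj_I
  rw [hIc] at h2
  have h2' : u.re - v.re = 0 := by
    have ha := hφ.im_eq_zero a
    have hb := hφ.im_eq_zero b
    simp [Complex.add_im, Complex.mul_im, Complex.I_re, Complex.I_im, ha, hb] at h2
    linarith
  apply Complex.ext
  · simp only [Complex.conj_re]
    linarith
  · simp only [Complex.conj_im]
    linarith

lemma norm_one_le (R : Type*) [CStarAlgebra R] : ‖(1 : R)‖ ≤ 1 := by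
  rcases subsingleton_or_nontrivial R with h | h
  · simp [Subsingleton.elim (1 : R) 0]
  · simp

lemma state_diag_le (hφ : IsFaithfulTracialState R φ) (a : R) :
    (φ (star a * a)).re ≤ ‖a‖ ^ 2 := by
  letI := CStarAlgebra.spectralOrder R
  letI := CStarAlgebra.spectralOrderedRing R
  have hle : star a * a ≤ algebraMap ℝ R (‖a‖ ^ 2) :=
    CStarAlgebra.star_mul_le_algebraMap_norm_sq
  set g : R := algebraMap ℝ R (‖a‖ ^ 2) - star a * a with hg
  have hg0 : 0 ≤ g := sub_nonneg.mpr hle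
  set s : R := CFC.sqrt g with hs
  have hs0 : 0 ≤ s := CFC.sqrt_nonneg (a := g)
  have hssa : IsSelfAdjoint s := .of_nonneg hs0
  have hsq : star s * s = g := by
    rw [hssa.star_eq, CFC.sqrt_mul_sqrt_self g hg0]
  have hre : 0 ≤ (φ g).re := by rw [← hsq]; exact hφ.nonneg_re s
  have halg : φ (algebraMap ℝ R (‖a‖ ^ 2)) = (‖a‖ ^ 2 : ℝ) := by
    have : algebraMap ℝ R (‖a‖ ^ 2) = ((‖a‖ ^ 2 : ℝ) : ℂ) • (1 : R) := by
      rw [IsScalarTower.algebraMap_apply ℝ ℂ R, Algebra.algebraMap_eq_smul_one,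
        Complex.coe_algebraMap]
    rw [this, hφ.map_smul, hφ.map_one, mul_one]
  have := state_map_sub hφ (algebraMap ℝ R (‖a‖ ^ 2)) (star a * a)
  rw [← hg, halg] at this
  have : (φ g).re = ‖a‖ ^ 2 - (φ (star a * a)).re := by
    rw [this]
    simp [Complex.sub_re, ← Complex.ofReal_pow]
  linarith [hre, this ▸ hre]

lemma state_norm_le (hφ : IsFaithfulTracialState R φ) (a : R) : ‖φ a‖ ≤ ‖a‖ := by
  set z := φ a with hz
  have key : φ (star (a - z • 1) * (a - z • 1)) = φ (star a * a) - z * starRingEnd ℂ z := by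
    have expand : star (a - z • 1) * (a - z • 1) =
        star a * a - z • (star a * 1) - (starRingEnd ℂ z) • (star (1 : R) * a) +
          (starRingEnd ℂ z * z) • (star (1 : R) * 1) := by
      rw [star_sub, star_smul, sub_mul, mul_sub, mul_sub, Complex.star_def]
      rw [smul_mul_assoc, smul_mul_assoc, mul_smul_comm, mul_smul_comm, smul_smul]
      abel
    have h1a : φ (star (1 : R) * a) = z := by rw [star_one, one_mul]
    have ha1 : φ (star a * 1) = starRingEnd ℂ z := by
      rw [state_herm hφ 1 a, star_one, one_mul]
    have h11 : φ (star (1 : R) * 1) = 1 := by rw [star_one, one_mul, hφ.map_one]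
    rw [expand]
    rw [hφ.map_add, state_map_sub hφ, state_map_sub hφ]
    rw [hφ.map_smul, hφ.map_smul, hφ.map_smul, h1a, ha1, h11, mul_one]
    ring
  have hnn := hφ.nonneg_re (a - z • 1)
  rw [key] at hnn
  have hzz : (z * starRingEnd ℂ z).re = ‖z‖ ^ 2 := by
    rw [Complex.mul_conj]
    simp [Complex.normSq_eq_norm_sq, ← Complex.ofReal_pow]
  have h1 : ‖z‖ ^ 2 ≤ (φ (star a * a)).re := by
    have := hnn
    rw [Complex.sub_re, hzz] at this
    linarith
  have h2 := state_diag_le hφ a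
  have : ‖z‖ ^ 2 ≤ ‖a‖ ^ 2 := le_trans h1 h2
  have hna : 0 ≤ ‖a‖ := norm_nonneg a
  nlinarith [norm_nonneg z]


open Pointwise in
lemma exists_ts {R : Type*} [CStarAlgebra R] {c : R} (hc : IsUnit c) :
    ∃ t s : ℝ, 0 < t ∧ s < t ∧ ‖algebraMap ℂ R (t : ℂ) - star c * c‖ ≤ s := by
  rcases subsingleton_or_nontrivial R with hsub | hnt
  · refine ⟨1, 0, one_pos, zero_lt_one, ?_⟩
    have hzero : ∀ v : R, v = 0 := fun v => Subsingleton.elim v 0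
    rw [hzero (algebraMap ℂ R ((1 : ℝ) : ℂ) - star c * c), norm_zero]
  set h : R := star c * c with hh
  have hsa : IsSelfAdjoint h := IsSelfAdjoint.star_mul_self c
  have hhu : IsUnit h := (hc.star).mul hc
  set S : Set ℝ := spectrum ℝ h with hS
  have hScomp : IsCompact S := spectrum.isCompact h
  have hSne : S.Nonempty := by
    have himg := hsa.spectrumRestricts.image (f := Complex.reCLM)
    rw [hS, ← himg]
    exact (spectrum.nonempty h).image _
  have hSnn : ∀ r ∈ S, 0 ≤ r := spectrum_star_mul_self_nonneg
  have h0 : (0 : ℝ) ∉ S := by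
    rw [hS, spectrum.zero_mem_iff]
    exact fun hcon => hcon hhu
  set δ : ℝ := sInf S with hδ
  have hδS : δ ∈ S := hScomp.sInf_mem hSne
  have hδpos : 0 < δ := lt_of_le_of_ne (hSnn δ hδS) (fun hcon => h0 (hcon ▸ hδS))
  set M : ℝ := ‖h‖ with hM
  have hSM : ∀ r ∈ S, r ≤ M := fun r hr =>
    le_trans (le_abs_self r) (spectrum.norm_le_norm_of_mem hr)
  have hδM : δ ≤ M := hSM δ hδS
  refine ⟨(δ + M) / 2, (M - δ) / 2, by linarith, by linarith, ?_⟩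
  set t : ℝ := (δ + M) / 2 with ht
  have halg : algebraMap ℂ R ((t : ℝ) : ℂ) = algebraMap ℝ R t := by
    rw [IsScalarTower.algebraMap_apply ℝ ℂ R, Complex.coe_algebraMap]
  rw [halg]
  set z : R := algebraMap ℝ R t - h with hzdef
  have hzsa : IsSelfAdjoint z := by
    refine IsSelfAdjoint.sub ?_ hsa
    exact IsSelfAdjoint.algebraMap R (isSelfAdjoint_iff.mpr (star_trivial t))
  have hspec : spectrum ℝ z = ({t} : Set ℝ) - S := by
    rw [hzdef, ← spectrum.singleton_sub_eq]
  have hbound : ∀ r ∈ spectrum ℝ z, ‖r‖₊ ≤ ((M - δ) / 2 : ℝ).toNNReal := by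
    intro r hr
    rw [hspec] at hr
    obtain ⟨t', ht', lam, hlam, rfl⟩ := hr
    rw [Set.mem_singleton_iff] at ht'
    subst ht'
    have h1 := hSnn lam hlam
    have h2 := hSM lam hlam
    have h3 : δ ≤ lam := csInf_le hScomp.bddBelow hlam
    have : |t - lam| ≤ (M - δ) / 2 := by
      rw [abs_le]; constructor <;> [linarith; linarith]
    rw [← NNReal.coe_le_coe]
    rw [coe_nnnorm, Real.norm_eq_abs]
    rw [Real.coe_toNNReal _ (by linarith)]
    exact this
  have hrad : ‖z‖ ≤ (M - δ) / 2 := by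
    have hz := hzsa.toReal_spectralRadius_eq_norm
    rw [← hz]
    have : spectralRadius ℝ z ≤ (((M - δ) / 2 : ℝ).toNNReal : NNReal) := by
      rw [spectralRadius]
      exact iSup₂_le fun k hk => by exact_mod_cast ENNReal.coe_le_coe.mpr (hbound k hk)
    calc (spectralRadius ℝ z).toReal ≤ ((((M - δ) / 2 : ℝ).toNNReal : NNReal) : ℝ) := by
          refine ENNReal.toReal_le_coe_of_le_coe ?_
          exact this
      _ = (M - δ) / 2 := Real.coe_toNNReal _ (by linarith)
  exact hrad


section Approx

variable {m : ℕ} {A : ℕ → Type*} [∀ n, CStarAlgebra (A n)] {B : Type*} [CStarAlgebra B]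
  (x : ∀ n, Fin m → A n) (y : Fin m → B)

/-- Uniform approximation of the sequence `b`/limit `c` by a single noncommutative
polynomial evaluated at the tuples. -/
def GA (b : ∀ n, A n) (c : B) : Prop :=
  ∀ ε > 0, ∃ p : FreeAlgebra ℂ (Fin m ⊕ Fin m),
    ‖FreeAlgebra.lift ℂ (starTuple y) p - c‖ ≤ ε ∧
    ∀ᶠ n in atTop, ‖FreeAlgebra.lift ℂ (starTuple (x n)) p - b n‖ ≤ ε

/-- Norm convergence of polynomial evaluations. -/
def NC : Prop :=
  ∀ p : FreeAlgebra ℂ (Fin m ⊕ Fin m),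
    Tendsto (fun n => ‖FreeAlgebra.lift ℂ (starTuple (x n)) p‖) atTop
      (𝓝 ‖FreeAlgebra.lift ℂ (starTuple y) p‖)

variable {x y}

lemma GA.congr {b b' : ∀ n, A n} {c : B} (h : GA x y b c) (he : ∀ᶠ n in atTop, b' n = b n) :
    GA x y b' c := by
  intro ε hε
  obtain ⟨p, h1, h2⟩ := h ε hε
  exact ⟨p, h1, by filter_upwards [h2, he] with n h2 he; rw [he]; exact h2⟩

lemma GA.const (z : ℂ) : GA x y (fun n => algebraMap ℂ (A n) z) (algebraMap ℂ B z) := by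
  intro ε hε
  refine ⟨algebraMap ℂ _ z, ?_, Eventually.of_forall fun n => ?_⟩
  · rw [AlgHom.commutes, sub_self, norm_zero]; exact hε.le
  · rw [AlgHom.commutes, sub_self, norm_zero]; exact hε.le

lemma GA.one : GA x y (fun n => (1 : A n)) (1 : B) := by
  have := GA.const (x := x) (y := y) 1
  simpa using this

lemma GA.var (i : Fin m ⊕ Fin m) :
    GA x y (fun n => starTuple (x n) i) (starTuple y i) := by
  intro ε hε
  refine ⟨FreeAlgebra.ι ℂ i, ?_, Eventually.of_forall fun n => ?_⟩
  · rw [FreeAlgebra.lift_ι_apply, sub_self, norm_zero]; exact hε.le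
  · rw [FreeAlgebra.lift_ι_apply, sub_self, norm_zero]; exact hε.le

lemma GA.add {b b' : ∀ n, A n} {c c' : B} (h : GA x y b c) (h' : GA x y b' c') :
    GA x y (fun n => b n + b' n) (c + c') := by
  intro ε hε
  obtain ⟨p, h1, h2⟩ := h (ε / 2) (by linarith)
  obtain ⟨q, h1', h2'⟩ := h' (ε / 2) (by linarith)
  refine ⟨p + q, ?_, ?_⟩
  · rw [map_add]
    calc ‖_ + _ - (c + c')‖ = ‖(FreeAlgebra.lift ℂ (starTuple y) p - c) +
          (FreeAlgebra.lift ℂ (starTuple y) q - c')‖ := by congr 1; abel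
      _ ≤ _ + _ := norm_add_le _ _
      _ ≤ ε / 2 + ε / 2 := add_le_add h1 h1'
      _ = ε := by ring
  · filter_upwards [h2, h2'] with n h2 h2'
    rw [map_add]
    calc ‖_ + _ - (b n + b' n)‖ = ‖(FreeAlgebra.lift ℂ (starTuple (x n)) p - b n) +
          (FreeAlgebra.lift ℂ (starTuple (x n)) q - b' n)‖ := by congr 1; abel
      _ ≤ _ + _ := norm_add_le _ _
      _ ≤ ε / 2 + ε / 2 := add_le_add h2 h2'
      _ = ε := by ring

lemma GA.smul {b : ∀ n, A n} {c : B} (z : ℂ) (h : GA x y b c) :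
    GA x y (fun n => z • b n) (z • c) := by
  intro ε hε
  rcases eq_or_ne z 0 with rfl | hz
  · refine ⟨0, ?_, Eventually.of_forall fun n => ?_⟩ <;> simp [hε.le]
  obtain ⟨p, h1, h2⟩ := h (ε / ‖z‖) (div_pos hε (norm_pos_iff.mpr hz))
  have hz' : ‖z‖ ≠ 0 := norm_ne_zero_iff.mpr hz
  refine ⟨z • p, ?_, ?_⟩
  · rw [map_smul, ← smul_sub, norm_smul]
    calc ‖z‖ * ‖_‖ ≤ ‖z‖ * (ε / ‖z‖) := by gcongr
      _ = ε := by rw [mul_comm, div_mul_cancel₀ ε hz']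
  · filter_upwards [h2] with n h2
    rw [map_smul, ← smul_sub, norm_smul]
    calc ‖z‖ * ‖_‖ ≤ ‖z‖ * (ε / ‖z‖) := by gcongr
      _ = ε := by rw [mul_comm, div_mul_cancel₀ ε hz']

lemma GA.sub {b b' : ∀ n, A n} {c c' : B} (h : GA x y b c) (h' : GA x y b' c') :
    GA x y (fun n => b n - b' n) (c - c') := by
  have := h.add (h'.smul (-1 : ℂ))
  simpa [sub_eq_add_neg] using this

lemma GA.of_close {b : ∀ n, A n} {c : B}
    (h : ∀ ε > (0 : ℝ), ∃ (u : ∀ n, A n) (v : B), GA x y u v ∧ ‖v - c‖ ≤ ε ∧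
      ∀ᶠ n in atTop, ‖u n - b n‖ ≤ ε) : GA x y b c := by
  intro ε hε
  obtain ⟨u, v, hga, hv, hu⟩ := h (ε / 2) (by linarith)
  obtain ⟨p, h1, h2⟩ := hga (ε / 2) (by linarith)
  refine ⟨p, ?_, ?_⟩
  · calc ‖FreeAlgebra.lift ℂ (starTuple y) p - c‖
        = ‖(FreeAlgebra.lift ℂ (starTuple y) p - v) + (v - c)‖ := by congr 1; abel
      _ ≤ _ + _ := norm_add_le _ _
      _ ≤ ε / 2 + ε / 2 := add_le_add h1 hv
      _ = ε := by ring
  · filter_upwards [h2, hu] with n h2 hu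
    calc ‖FreeAlgebra.lift ℂ (starTuple (x n)) p - b n‖
        = ‖(FreeAlgebra.lift ℂ (starTuple (x n)) p - u n) + (u n - b n)‖ := by congr 1; abel
      _ ≤ _ + _ := norm_add_le _ _
      _ ≤ ε / 2 + ε / 2 := add_le_add h2 hu
      _ = ε := by ring

lemma GA.norm_le (hN : NC x y) {b : ∀ n, A n} {c : B} (h : GA x y b c) :
    ∀ ε > (0 : ℝ), ∀ᶠ n in atTop, ‖b n‖ ≤ ‖c‖ + ε := by
  intro ε hε
  obtain ⟨p, h1, h2⟩ := h (ε / 3) (by linarith)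
  have h3 := (hN p).eventually (eventually_le_nhds (by linarith :
    ‖FreeAlgebra.lift ℂ (starTuple y) p‖ < ‖FreeAlgebra.lift ℂ (starTuple y) p‖ + ε / 3))
  filter_upwards [h2, h3] with n h2 h3
  calc ‖b n‖ = ‖FreeAlgebra.lift ℂ (starTuple (x n)) p - (FreeAlgebra.lift ℂ (starTuple (x n)) p - b n)‖ := by congr 1; abel
    _ ≤ ‖FreeAlgebra.lift ℂ (starTuple (x n)) p‖ + ‖FreeAlgebra.lift ℂ (starTuple (x n)) p - b n‖ := norm_sub_le _ _
    _ ≤ (‖FreeAlgebra.lift ℂ (starTuple y) p‖ + ε / 3) + ε / 3 := add_le_add h3 h2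
    _ ≤ (‖c‖ + ε / 3 + ε / 3) + ε / 3 := by
        gcongr
        calc ‖FreeAlgebra.lift ℂ (starTuple y) p‖
            = ‖c + (FreeAlgebra.lift ℂ (starTuple y) p - c)‖ := by congr 1; abel
          _ ≤ ‖c‖ + ‖FreeAlgebra.lift ℂ (starTuple y) p - c‖ := norm_add_le _ _
          _ ≤ ‖c‖ + ε / 3 := by gcongr
    _ = ‖c‖ + ε := by ring

lemma norm_mul_sub_mul {R : Type*} [NormedRing R] (p q b b' : R) :
    ‖p * q - b * b'‖ ≤ ‖p - b‖ * ‖q‖ + ‖b‖ * ‖q - b'‖ := by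
  have key : p * q - b * b' = (p - b) * q + b * (q - b') := by rw [sub_mul, mul_sub]; abel
  rw [key]
  exact le_trans (norm_add_le _ _) (add_le_add (norm_mul_le _ _) (norm_mul_le _ _))

lemma GA.mul (hN : NC x y) {b b' : ∀ n, A n} {c c' : B}
    (h : GA x y b c) (h' : GA x y b' c') :
    GA x y (fun n => b n * b' n) (c * c') := by
  intro ε hε
  set C : ℝ := ‖c‖ + ‖c'‖ + 3 with hC
  have hC0 : 0 < C := by positivity
  set δ : ℝ := min (ε / C) 1 with hδdef
  have hδ0 : 0 < δ := lt_min (by positivity) one_pos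
  have hδ1 : δ ≤ 1 := min_le_right _ _
  obtain ⟨p, h1, h2⟩ := h δ hδ0
  obtain ⟨q, h1', h2'⟩ := h' δ hδ0
  have hbb := h.norm_le hN 1 one_pos
  have hbb' := h'.norm_le hN 1 one_pos
  have hδC : δ * C ≤ ε := by
    calc δ * C ≤ (ε / C) * C := by gcongr; exact min_le_left _ _
      _ = ε := by field_simp
  refine ⟨p * q, ?_, ?_⟩
  · rw [map_mul]
    have hq : ‖FreeAlgebra.lift ℂ (starTuple y) q‖ ≤ ‖c'‖ + 1 := by
      calc ‖FreeAlgebra.lift ℂ (starTuple y) q‖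
          = ‖c' + (FreeAlgebra.lift ℂ (starTuple y) q - c')‖ := by congr 1; abel
        _ ≤ ‖c'‖ + ‖FreeAlgebra.lift ℂ (starTuple y) q - c'‖ := norm_add_le _ _
        _ ≤ ‖c'‖ + δ := by gcongr
        _ ≤ ‖c'‖ + 1 := by gcongr
    calc ‖_ - c * c'‖ ≤ ‖FreeAlgebra.lift ℂ (starTuple y) p - c‖ *
          ‖FreeAlgebra.lift ℂ (starTuple y) q‖ +
          ‖c‖ * ‖FreeAlgebra.lift ℂ (starTuple y) q - c'‖ := norm_mul_sub_mul _ _ _ _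
      _ ≤ δ * (‖c'‖ + 1) + ‖c‖ * δ :=
          add_le_add (mul_le_mul h1 hq (norm_nonneg _) hδ0.le)
            (mul_le_mul_of_nonneg_left h1' (norm_nonneg _))
      _ ≤ δ * C := by rw [hC]; nlinarith [norm_nonneg c, norm_nonneg c', hδ0.le]
      _ ≤ ε := hδC
  · filter_upwards [h2, h2', hbb, hbb'] with n h2 h2' hbb hbb'
    rw [map_mul]
    have hq : ‖FreeAlgebra.lift ℂ (starTuple (x n)) q‖ ≤ ‖c'‖ + 2 := by
      calc ‖FreeAlgebra.lift ℂ (starTuple (x n)) q‖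
          = ‖b' n + (FreeAlgebra.lift ℂ (starTuple (x n)) q - b' n)‖ := by congr 1; abel
        _ ≤ ‖b' n‖ + ‖FreeAlgebra.lift ℂ (starTuple (x n)) q - b' n‖ := norm_add_le _ _
        _ ≤ (‖c'‖ + 1) + δ := add_le_add hbb' h2'
        _ ≤ ‖c'‖ + 2 := by linarith
    calc ‖_ - b n * b' n‖ ≤ ‖FreeAlgebra.lift ℂ (starTuple (x n)) p - b n‖ *
          ‖FreeAlgebra.lift ℂ (starTuple (x n)) q‖ +
          ‖b n‖ * ‖FreeAlgebra.lift ℂ (starTuple (x n)) q - b' n‖ := norm_mul_sub_mul _ _ _ _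
      _ ≤ δ * (‖c'‖ + 2) + (‖c‖ + 1) * δ :=
          add_le_add (mul_le_mul h2 hq (norm_nonneg _) hδ0.le)
            (mul_le_mul hbb h2' (norm_nonneg _) (by positivity))
      _ = δ * C := by rw [hC]; ring
      _ ≤ ε := hδC

lemma GA.zero : GA x y (fun _ => (0 : A _)) (0 : B) := by
  have := GA.const (x := x) (y := y) 0
  simpa using this

lemma GA.pow (hN : NC x y) {b : ∀ n, A n} {c : B} (h : GA x y b c) (k : ℕ) :
    GA x y (fun n => b n ^ k) (c ^ k) := by
  induction k with
  | zero => simpa [pow_zero] using GA.one (x := x) (y := y)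
  | succ k ih => simpa [pow_succ] using ih.mul hN h

lemma GA.neumann_inv (hN : NC x y) {e : ∀ n, A n} {d : B} (hga : GA x y e d)
    {t s : ℝ} (ht : 0 < t) (hst : s < t) (hd : ‖algebraMap ℂ B (t : ℂ) - d‖ ≤ s) :
    (∀ᶠ n in atTop, IsUnit (e n)) ∧
      GA x y (fun n => Ring.inverse (e n)) (Ring.inverse d) := by
  have hs0 : 0 ≤ s := le_trans (norm_nonneg _) hd
  set s' : ℝ := (s + t) / 2 with hs'def
  have hss' : s ≤ s' := by rw [hs'def]; linarith
  have hs't : s' < t := by rw [hs'def]; linarith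
  have hs'0 : 0 ≤ s' := le_trans hs0 hss'
  have hgap : GA x y (fun n => algebraMap ℂ (A n) (t : ℂ) - e n)
      (algebraMap ℂ B (t : ℂ) - d) := (GA.const (t : ℂ)).sub hga
  have hev : ∀ᶠ n in atTop, ‖algebraMap ℂ (A n) (t : ℂ) - e n‖ ≤ s' := by
    have hup := hgap.norm_le hN ((t - s) / 2) (by linarith)
    filter_upwards [hup] with n hn
    calc ‖algebraMap ℂ (A n) (t : ℂ) - e n‖
        ≤ ‖algebraMap ℂ B (t : ℂ) - d‖ + (t - s) / 2 := hn
      _ ≤ s + (t - s) / 2 := by gcongr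
      _ = s' := by rw [hs'def]; ring
  have hunit_ev : ∀ᶠ n in atTop, IsUnit (e n) := by
    filter_upwards [hev] with n hn
    exact (SC4.neumann (norm_one_le _) ht hs't hn 0).1
  have hunit_d : IsUnit d := (SC4.neumann (norm_one_le _) ht hst hd 0).1
  refine ⟨hunit_ev, GA.of_close ?_⟩
  intro ε hε
  have hρ1 : s' / t < 1 := by rw [div_lt_one ht]; exact hs't
  have hρ0 : 0 ≤ s' / t := by positivity
  have htend : Tendsto (fun K : ℕ => (s' / t) ^ K / (t - s')) atTop (𝓝 0) := by
    have h0 := tendsto_pow_atTop_nhds_zero_of_lt_one hρ0 hρ1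
    have := h0.div_const (t - s')
    simpa using this
  obtain ⟨K, hK⟩ := (htend.eventually (eventually_le_nhds hε)).exists
  refine ⟨fun n => (t : ℂ)⁻¹ • ∑ k ∈ Finset.range K, (1 - (t : ℂ)⁻¹ • e n) ^ k,
    (t : ℂ)⁻¹ • ∑ k ∈ Finset.range K, (1 - (t : ℂ)⁻¹ • d) ^ k, ?_, ?_, ?_⟩
  · refine GA.smul _ ?_
    have hbase : GA x y (fun n => 1 - (t : ℂ)⁻¹ • e n) (1 - (t : ℂ)⁻¹ • d) :=
      GA.one.sub (hga.smul _)
    have hsum : ∀ J : ℕ, GA x y (fun n => ∑ k ∈ Finset.range J, (1 - (t : ℂ)⁻¹ • e n) ^ k)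
        (∑ k ∈ Finset.range J, (1 - (t : ℂ)⁻¹ • d) ^ k) := by
      intro J
      induction J with
      | zero => simpa using GA.zero (x := x) (y := y)
      | succ J ih =>
          have := ih.add (hbase.pow hN J)
          simpa [Finset.sum_range_succ] using this
    exact hsum K
  · have hbound := (SC4.neumann (norm_one_le B) ht hst hd K).2
    rw [norm_sub_rev]
    calc ‖Ring.inverse d - (t : ℂ)⁻¹ • ∑ k ∈ Finset.range K, (1 - (t : ℂ)⁻¹ • d) ^ k‖
        ≤ (s / t) ^ K / (t - s) := hbound
      _ ≤ (s' / t) ^ K / (t - s') := by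
          have h1 : (s / t) ^ K ≤ (s' / t) ^ K :=
            pow_le_pow_left₀ (div_nonneg hs0 ht.le) ((div_le_div_iff_of_pos_right ht).mpr hss') K
          exact div_le_div₀ (by positivity) h1 (by linarith) (by linarith)
      _ ≤ ε := hK
  · filter_upwards [hev] with n hn
    have hbound := (SC4.neumann (norm_one_le (A n)) ht hs't hn K).2
    rw [norm_sub_rev]
    exact le_trans hbound hK

lemma isUnit_and_inverse {R : Type*} [Ring R] [StarRing R] {a : R}
    (h1 : IsUnit (star a * a)) (h2 : IsUnit (a * star a)) :
    IsUnit a ∧ Ring.inverse a = Ring.inverse (star a * a) * star a := by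
  set l : R := Ring.inverse (star a * a) * star a with hl_def
  have hl : l * a = 1 := by
    rw [hl_def, mul_assoc]; exact Ring.inverse_mul_cancel _ h1
  set rr : R := star a * Ring.inverse (a * star a) with hr_def
  have hr : a * rr = 1 := by
    rw [hr_def, ← mul_assoc]; exact Ring.mul_inverse_cancel _ h2
  have hlr : l = rr := by
    calc l = l * (a * rr) := by rw [hr, mul_one]
      _ = (l * a) * rr := (mul_assoc l a rr).symm
      _ = rr := by rw [hl, one_mul]
  have hbl : a * l = 1 := by rw [hlr]; exact hr
  have hbu : IsUnit a := ⟨⟨a, l, hbl, hl⟩, rfl⟩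
  refine ⟨hbu, ?_⟩
  calc Ring.inverse a = Ring.inverse a * (a * l) := by rw [hbl, mul_one]
    _ = (Ring.inverse a * a) * l := (mul_assoc (Ring.inverse a) a l).symm
    _ = l := by rw [Ring.inverse_mul_cancel _ hbu, one_mul]

lemma GA.inv (hN : NC x y) {b : ∀ n, A n} {c : B} (hb : GA x y b c)
    (hbs : GA x y (fun n => star (b n)) (star c)) (hc : IsUnit c) :
    (∀ᶠ n in atTop, IsUnit (b n)) ∧
    GA x y (fun n => Ring.inverse (b n)) (Ring.inverse c) ∧
    GA x y (fun n => star (Ring.inverse (b n))) (star (Ring.inverse c)) := by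
  obtain ⟨t, s, ht, hst, hd⟩ := SC4.exists_ts hc
  obtain ⟨t', s', ht', hst', hd'⟩ := SC4.exists_ts hc.star
  rw [star_star] at hd'
  have hh : GA x y (fun n => star (b n) * b n) (star c * c) := hbs.mul hN hb
  have hh' : GA x y (fun n => b n * star (b n)) (c * star c) := hb.mul hN hbs
  obtain ⟨hu1, hp1⟩ := hh.neumann_inv hN ht hst hd
  obtain ⟨hu2, hp2⟩ := hh'.neumann_inv hN ht' hst' hd'
  have hcu1 : IsUnit (star c * c) := hc.star.mul hc
  have hcu2 : IsUnit (c * star c) := hc.mul hc.star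
  obtain ⟨-, hcinv⟩ := isUnit_and_inverse hcu1 hcu2
  have hcsinv : Ring.inverse (star c) = Ring.inverse (c * star c) * c := by
    have h1' : IsUnit (star (star c) * star c) := by rw [star_star]; exact hcu2
    have h2' : IsUnit (star c * star (star c)) := by rw [star_star]; exact hcu1
    obtain ⟨-, h⟩ := isUnit_and_inverse h1' h2'
    rw [h, star_star]
  have hbunit : ∀ᶠ n in atTop, IsUnit (b n) ∧
      Ring.inverse (b n) = Ring.inverse (star (b n) * b n) * star (b n) ∧
      Ring.inverse (star (b n)) = Ring.inverse (b n * star (b n)) * b n := by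
    filter_upwards [hu1, hu2] with n h1 h2
    obtain ⟨hbu, hbi⟩ := isUnit_and_inverse h1 h2
    refine ⟨hbu, hbi, ?_⟩
    have h1' : IsUnit (star (star (b n)) * star (b n)) := by rw [star_star]; exact h2
    have h2' : IsUnit (star (b n) * star (star (b n))) := by rw [star_star]; exact h1
    obtain ⟨-, h⟩ := isUnit_and_inverse h1' h2'
    rw [h, star_star]
  refine ⟨hbunit.mono fun n hn => hn.1, ?_, ?_⟩
  · have hmul : GA x y (fun n => Ring.inverse (star (b n) * b n) * star (b n))
        (Ring.inverse (star c * c) * star c) := hp1.mul hN hbs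
    rw [← hcinv] at hmul
    exact hmul.congr (hbunit.mono fun n hn => hn.2.1)
  · have hmul : GA x y (fun n => Ring.inverse (b n * star (b n)) * b n)
        (Ring.inverse (c * star c) * c) := hp2.mul hN hb
    rw [← hcsinv] at hmul
    have goal' : GA x y (fun n => Ring.inverse (star (b n))) (Ring.inverse (star c)) :=
      hmul.congr (hbunit.mono fun n hn => hn.2.2)
    simp only [Ring.inverse_star] at goal'
    exact goal'

lemma star_starTuple {m : ℕ} {R : Type*} [CStarAlgebra R] (v : Fin m → R) (i : Fin m ⊕ Fin m) :
    star (starTuple v i) = starTuple v i.swap := by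
  cases i <;> simp [starTuple, Sum.swap]

lemma eval?_scalar {σ B' : Type*} [Ring B'] [Algebra ℂ B'] (z : ℂ) (a : σ → B') :
    (RatExpr.scalar z).eval? a = some (algebraMap ℂ B' z) := rfl

lemma eval?_var {σ B' : Type*} [Ring B'] [Algebra ℂ B'] (i : σ) (a : σ → B') :
    (RatExpr.var i).eval? a = some (a i) := rfl

lemma eval?_add {σ B' : Type*} [Ring B'] [Algebra ℂ B'] (r s : RatExpr σ) (a : σ → B') :
    (RatExpr.add r s).eval? a
      = (r.eval? a).bind fun u => (s.eval? a).bind fun v => some (u + v) := rfl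

lemma eval?_mul {σ B' : Type*} [Ring B'] [Algebra ℂ B'] (r s : RatExpr σ) (a : σ → B') :
    (RatExpr.mul r s).eval? a
      = (r.eval? a).bind fun u => (s.eval? a).bind fun v => some (u * v) := rfl

open Classical in
lemma eval?_inv {σ B' : Type*} [Ring B'] [Algebra ℂ B'] (r : RatExpr σ) (a : σ → B') :
    (RatExpr.inv r).eval? a
      = (r.eval? a).bind fun b => if IsUnit b then some (Ring.inverse b) else none := rfl

lemma eval_of_eval? {σ B' : Type*} [Ring B'] [Algebra ℂ B'] {r : RatExpr σ} {a : σ → B'} {u : B'}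
    (h : r.eval? a = some u) : r.eval a = u := by
  rw [RatExpr.eval, h, Option.getD_some]

lemma main_ind (hN : NC x y) (r : RatExpr (Fin m ⊕ Fin m))
    (hdom : (r.eval? (starTuple y)).isSome) :
    (∀ᶠ n in atTop, (r.eval? (starTuple (x n))).isSome) ∧
    GA x y (fun n => r.eval (starTuple (x n))) (r.eval (starTuple y)) ∧
    GA x y (fun n => star (r.eval (starTuple (x n)))) (star (r.eval (starTuple y))) := by
  induction r with
  | scalar z =>
      refine ⟨Eventually.of_forall fun n => by rw [eval?_scalar]; rfl, ?_, ?_⟩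
      · have h1 : ∀ n, (RatExpr.scalar z).eval (starTuple (x n)) = algebraMap ℂ (A n) z :=
          fun n => eval_of_eval? (eval?_scalar z _)
        have h2 : (RatExpr.scalar z).eval (starTuple y) = algebraMap ℂ B z :=
          eval_of_eval? (eval?_scalar z _)
        rw [h2]
        exact (GA.const z).congr (Eventually.of_forall fun n => h1 n)
      · have h1 : ∀ n, (RatExpr.scalar z).eval (starTuple (x n)) = algebraMap ℂ (A n) z :=
          fun n => eval_of_eval? (eval?_scalar z _)
        have h2 : (RatExpr.scalar z).eval (starTuple y) = algebraMap ℂ B z :=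
          eval_of_eval? (eval?_scalar z _)
        rw [h2, ← algebraMap_star_comm]
        exact (GA.const (star z)).congr (Eventually.of_forall fun n => by
          rw [h1 n, ← algebraMap_star_comm])
  | var i =>
      refine ⟨Eventually.of_forall fun n => by rw [eval?_var]; rfl, ?_, ?_⟩
      · have h1 : ∀ n, (RatExpr.var i).eval (starTuple (x n)) = starTuple (x n) i :=
          fun n => eval_of_eval? (eval?_var i _)
        have h2 : (RatExpr.var i).eval (starTuple y) = starTuple y i :=
          eval_of_eval? (eval?_var i _)
        rw [h2]
        exact (GA.var i).congr (Eventually.of_forall fun n => h1 n)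
      · have h1 : ∀ n, (RatExpr.var i).eval (starTuple (x n)) = starTuple (x n) i :=
          fun n => eval_of_eval? (eval?_var i _)
        have h2 : (RatExpr.var i).eval (starTuple y) = starTuple y i :=
          eval_of_eval? (eval?_var i _)
        rw [h2, star_starTuple]
        exact (GA.var i.swap).congr (Eventually.of_forall fun n => by
          rw [h1 n, star_starTuple])
  | add r s ihr ihs =>
      rw [eval?_add] at hdom
      cases hr : r.eval? (starTuple y) with
      | none => rw [hr] at hdom; simp at hdom
      | some u =>
      cases hs : s.eval? (starTuple y) with
      | none => rw [hr, hs] at hdom; simp at hdom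
      | some v =>
      obtain ⟨hrd, hr1, hr2⟩ := ihr (by rw [hr]; rfl)
      obtain ⟨hsd, hs1, hs2⟩ := ihs (by rw [hs]; rfl)
      have hval : (RatExpr.add r s).eval (starTuple y)
          = r.eval (starTuple y) + s.eval (starTuple y) := by
        rw [eval_of_eval? (by rw [eval?_add, hr, hs]; rfl),
          eval_of_eval? hr, eval_of_eval? hs]
      have hvaln : ∀ᶠ n in atTop, (RatExpr.add r s).eval (starTuple (x n))
          = r.eval (starTuple (x n)) + s.eval (starTuple (x n)) ∧
          ((RatExpr.add r s).eval? (starTuple (x n))).isSome := by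
        filter_upwards [hrd, hsd] with n hrd hsd
        obtain ⟨un, hun⟩ := Option.isSome_iff_exists.mp hrd
        obtain ⟨vn, hvn⟩ := Option.isSome_iff_exists.mp hsd
        constructor
        · rw [eval_of_eval? (by rw [eval?_add, hun, hvn]; rfl),
            eval_of_eval? hun, eval_of_eval? hvn]
        · rw [eval?_add, hun, hvn]; rfl
      refine ⟨hvaln.mono fun n hn => hn.2, ?_, ?_⟩
      · rw [hval]
        exact (hr1.add hs1).congr (hvaln.mono fun n hn => hn.1)
      · rw [hval, star_add]
        exact (hr2.add hs2).congr (hvaln.mono fun n hn => by rw [hn.1, star_add])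
  | mul r s ihr ihs =>
      rw [eval?_mul] at hdom
      cases hr : r.eval? (starTuple y) with
      | none => rw [hr] at hdom; simp at hdom
      | some u =>
      cases hs : s.eval? (starTuple y) with
      | none => rw [hr, hs] at hdom; simp at hdom
      | some v =>
      obtain ⟨hrd, hr1, hr2⟩ := ihr (by rw [hr]; rfl)
      obtain ⟨hsd, hs1, hs2⟩ := ihs (by rw [hs]; rfl)
      have hval : (RatExpr.mul r s).eval (starTuple y)
          = r.eval (starTuple y) * s.eval (starTuple y) := by
        rw [eval_of_eval? (by rw [eval?_mul, hr, hs]; rfl),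
          eval_of_eval? hr, eval_of_eval? hs]
      have hvaln : ∀ᶠ n in atTop, (RatExpr.mul r s).eval (starTuple (x n))
          = r.eval (starTuple (x n)) * s.eval (starTuple (x n)) ∧
          ((RatExpr.mul r s).eval? (starTuple (x n))).isSome := by
        filter_upwards [hrd, hsd] with n hrd hsd
        obtain ⟨un, hun⟩ := Option.isSome_iff_exists.mp hrd
        obtain ⟨vn, hvn⟩ := Option.isSome_iff_exists.mp hsd
        constructor
        · rw [eval_of_eval? (by rw [eval?_mul, hun, hvn]; rfl),
            eval_of_eval? hun, eval_of_eval? hvn]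
        · rw [eval?_mul, hun, hvn]; rfl
      refine ⟨hvaln.mono fun n hn => hn.2, ?_, ?_⟩
      · rw [hval]
        exact (hr1.mul hN hs1).congr (hvaln.mono fun n hn => hn.1)
      · rw [hval, star_mul]
        exact (hs2.mul hN hr2).congr (hvaln.mono fun n hn => by rw [hn.1, star_mul])
  | inv r ihr =>
      rw [eval?_inv] at hdom
      cases hr : r.eval? (starTuple y) with
      | none => rw [hr] at hdom; simp at hdom
      | some u =>
      rw [hr] at hdom
      have hu_unit : IsUnit u := by
        by_contra hcon
        rw [Option.bind_some] at hdom
        simp [hcon] at hdom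
      have hval : (RatExpr.inv r).eval (starTuple y) = Ring.inverse (r.eval (starTuple y)) := by
        rw [eval_of_eval? (by rw [eval?_inv, hr, Option.bind_some, if_pos hu_unit]),
          eval_of_eval? hr]
      obtain ⟨hrd, hr1, hr2⟩ := ihr (by rw [hr]; rfl)
      have hu_unit' : IsUnit (r.eval (starTuple y)) := by rw [eval_of_eval? hr]; exact hu_unit
      obtain ⟨hev_unit, hinv1, hinv2⟩ := hr1.inv hN hr2 hu_unit'
      have hvaln : ∀ᶠ n in atTop, (RatExpr.inv r).eval (starTuple (x n))
          = Ring.inverse (r.eval (starTuple (x n))) ∧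
          ((RatExpr.inv r).eval? (starTuple (x n))).isSome := by
        filter_upwards [hrd, hev_unit] with n hrd hun
        obtain ⟨un, hun'⟩ := Option.isSome_iff_exists.mp hrd
        have hun2 : IsUnit un := by rw [← eval_of_eval? hun']; exact hun
        constructor
        · rw [eval_of_eval? (by rw [eval?_inv, hun', Option.bind_some, if_pos hun2]),
            eval_of_eval? hun']
        · rw [eval?_inv, hun', Option.bind_some, if_pos hun2]; rfl
      refine ⟨hvaln.mono fun n hn => hn.2, ?_, ?_⟩
      · rw [hval]
        exact hinv1.congr (hvaln.mono fun n hn => hn.1)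
      · rw [hval]
        exact hinv2.congr (hvaln.mono fun n hn => by rw [hn.1])

end Approx
end SC4

/-- If `x⁽ⁿ⁾` strongly converges to `x` and `(x, x*)` lies in the domain of the rational
expression `r`, then (the evaluations being defined for all sufficiently large `n`)
`τ⁽ⁿ⁾(r(x⁽ⁿ⁾, (x⁽ⁿ⁾)*)) → τ(r(x, x*))`. -/
theorem stmt4 {m : ℕ} {A : ℕ → Type*} [∀ n, CStarAlgebra (A n)]
    {B : Type*} [CStarAlgebra B]
    (τ' : ∀ n, A n → ℂ) (τ : B → ℂ)
    (hτ' : ∀ n, IsFaithfulTracialState (A n) (τ' n)) (hτ : IsFaithfulTracialState B τ)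
    (x : ∀ n, Fin m → A n) (y : Fin m → B)
    (hconv : StronglyConverges τ' τ x y)
    (r : RatExpr (Fin m ⊕ Fin m))
    (hdom : r.InDomain (starTuple y)) :
    (∀ᶠ n in atTop, r.InDomain (starTuple (x n))) ∧
    Tendsto (fun n => τ' n (r.eval (starTuple (x n)))) atTop (𝓝 (τ (r.eval (starTuple y)))) := by
  have hN : SC4.NC x y := fun p => (hconv p).2
  obtain ⟨hdom', hga, -⟩ := SC4.main_ind hN r hdom
  refine ⟨hdom', ?_⟩
  rw [Metric.tendsto_atTop]
  intro ε hε
  obtain ⟨p, h1, h2⟩ := hga (ε / 4) (by linarith)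
  have h3 := (hconv p).1
  rw [Metric.tendsto_atTop] at h3
  obtain ⟨N2, hN2⟩ := h3 (ε / 4) (by linarith)
  obtain ⟨N1, hN1⟩ := eventually_atTop.mp h2
  refine ⟨max N1 N2, fun n hn => ?_⟩
  have hn1 := hN1 n (le_trans (le_max_left _ _) hn)
  have hn2 := hN2 n (le_trans (le_max_right _ _) hn)
  set Pn : A n := FreeAlgebra.lift ℂ (starTuple (x n)) p with hPn
  set Py : B := FreeAlgebra.lift ℂ (starTuple y) p with hPy
  have e1 : dist (τ' n (r.eval (starTuple (x n)))) (τ' n Pn) ≤ ε / 4 := by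
    rw [dist_eq_norm, ← SC4.state_map_sub (hτ' n)]
    refine le_trans (SC4.state_norm_le (hτ' n) _) ?_
    exact le_trans (le_of_eq (norm_sub_rev _ _)) hn1
  have e3 : dist (τ Py) (τ (r.eval (starTuple y))) ≤ ε / 4 := by
    rw [dist_eq_norm, ← SC4.state_map_sub hτ]
    exact le_trans (SC4.state_norm_le hτ _) h1
  calc dist (τ' n (r.eval (starTuple (x n)))) (τ (r.eval (starTuple y)))
      ≤ dist (τ' n (r.eval (starTuple (x n)))) (τ' n Pn) + dist (τ' n Pn) (τ Py)
        + dist (τ Py) (τ (r.eval (starTuple y))) := dist_triangle4 _ _ _ _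
    _ < ε / 4 + ε / 4 + ε / 4 := by linarith [e1, hn2, e3]
    _ < ε := by linarith
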